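/- Let C be an [n, k, d] MDS code over F_q with b ≥ 2 and d + b - 1 < n. Then the number of codewords of C with b-weight exactly d + b - 1 is A^b(d+b-1) = n(q-1). -/

import Mathlib

/-- The cyclic `b`-weight of `x : ZMod n → F`. -/
noncomputable def wtb {F : Type*} [Zero F] {n : ℕ} (b : ℕ) (x : ZMod n → F) : ℕ :=
  Nat.card {i : ZMod n // ∃ j < b, x (i + (j : ZMod n)) ≠ 0}

open Finset
set_option linter.unusedSectionVars false

/-- `c` has support exactly the cyclic interval of length `d` starting at `i`. -/
def SuppInt {F : Type*} [Zero F] {n : ℕ} (d : ℕ) (c : ZMod n → F) (i : ZMod n) : Prop :=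
  ∀ x, c x ≠ 0 ↔ ∃ t < d, x = i + (t : ZMod n)

section aux
variable {F : Type*} [Field F] [Fintype F] [DecidableEq F] {n : ℕ} [NeZero n]

open Classical in
lemma wtb_eq_card (b : ℕ) (x : ZMod n → F) :
    wtb b x = (Finset.univ.filter fun i : ZMod n => ∃ j < b, x (i + (j : ZMod n)) ≠ 0).card := by
  rw [wtb, Nat.card_eq_fintype_card, Fintype.card_subtype]

lemma zmod_cast_inj {a b : ℕ} (ha : a < n) (hb : b < n) (h : (a : ZMod n) = b) : a = b := by
  have h1 := ZMod.val_cast_of_lt (n := n) ha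
  have h2 := ZMod.val_cast_of_lt (n := n) hb
  rw [h] at h1; omega

lemma hammingNorm_eq (x : ZMod n → F) :
    hammingNorm x = (Finset.univ.filter fun i : ZMod n => x i ≠ 0).card := rfl

/-- shift bijection between a filter on `ZMod n` and a filter on `range n`. -/
lemma card_filter_shift (z : ZMod n) (P : ZMod n → Prop) [DecidablePred P] :
    (Finset.univ.filter P).card = ((range n).filter fun m : ℕ => P (z + (m : ZMod n))).card := by
  apply Finset.card_bij' (fun x _ => (x - z).val) (fun m _ => z + (m : ZMod n))
  · intro x hx
    simp only [mem_filter, mem_range] at hx ⊢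
    refine ⟨ZMod.val_lt _, ?_⟩
    simpa [ZMod.natCast_val, ZMod.cast_id] using hx.2
  · intro m hm
    simp only [mem_filter, mem_range] at hm ⊢
    exact ⟨mem_univ _, hm.2⟩
  · intro x hx
    simp [ZMod.natCast_val, ZMod.cast_id]
  · intro m hm
    simp only [mem_filter, mem_range] at hm
    rw [add_sub_cancel_left, ZMod.val_cast_of_lt hm.1]

lemma suppInt_hammingNorm {d : ℕ} {c : ZMod n → F} {i : ZMod n} (h : SuppInt d c i)
    (hdn : d ≤ n) : hammingNorm c = d := by
  rw [hammingNorm_eq]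
  have he : (Finset.univ.filter fun x : ZMod n => c x ≠ 0)
      = (range d).image (fun t : ℕ => i + (t : ZMod n)) := by
    ext x
    simp only [mem_filter, mem_univ, true_and, mem_image, mem_range, h x]
    constructor
    · rintro ⟨t, ht, rfl⟩; exact ⟨t, ht, rfl⟩
    · rintro ⟨t, ht, rfl⟩; exact ⟨t, ht, rfl⟩
  rw [he, card_image_of_injOn, card_range]
  intro a ha b hb hab
  simp only [mem_coe, mem_range] at ha hb
  exact zmod_cast_inj (lt_of_lt_of_le ha hdn) (lt_of_lt_of_le hb hdn) (add_left_cancel hab)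

lemma suppInt_wtb {b d : ℕ} {c : ZMod n → F} {i : ZMod n} (h : SuppInt d c i)
    (hb : 1 ≤ b) (hd : 1 ≤ d) (hdb : d + b - 1 ≤ n) : wtb b c = d + b - 1 := by
  classical
  rw [wtb_eq_card]
  have hdb' : d + b - 1 = d + (b - 1) := by omega
  have he : (Finset.univ.filter fun x : ZMod n => ∃ j < b, c (x + (j : ZMod n)) ≠ 0)
      = (range (d + b - 1)).image (fun m : ℕ => (i - ((b - 1 : ℕ) : ZMod n)) + (m : ZMod n)) := by
    ext x
    simp only [mem_filter, mem_univ, true_and, mem_image, mem_range]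
    constructor
    · rintro ⟨j, hj, hcx⟩
      obtain ⟨t, ht, hxt⟩ := (h _).1 hcx
      refine ⟨(b - 1 - j) + t, by omega, ?_⟩
      have hx : x = i + (t : ZMod n) - (j : ZMod n) := by
        rw [← hxt]; ring
      have hcast : (((b - 1 - j) + t : ℕ) : ZMod n)
          = ((b - 1 : ℕ) : ZMod n) - (j : ZMod n) + (t : ZMod n) := by
        push_cast [Nat.cast_sub (by omega : j ≤ b - 1)]; ring
      rw [hx, hcast]; ring
    · rintro ⟨m, hm, rfl⟩
      by_cases hmb : m ≤ b - 1
      · refine ⟨b - 1 - m, by omega, ?_⟩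
        have : i - ((b - 1 : ℕ) : ZMod n) + (m : ZMod n) + ((b - 1 - m : ℕ) : ZMod n) = i := by
          push_cast [Nat.cast_sub hmb]; ring
        rw [this]
        exact (h i).2 ⟨0, hd, by simp⟩
      · refine ⟨0, by omega, ?_⟩
        have : i - ((b - 1 : ℕ) : ZMod n) + (m : ZMod n) + ((0 : ℕ) : ZMod n)
            = i + ((m - (b - 1) : ℕ) : ZMod n) := by
          push_cast [Nat.cast_sub (by omega : b - 1 ≤ m)]; ring
        rw [this]
        exact (h _).2 ⟨m - (b - 1), by omega, rfl⟩
  rw [he, card_image_of_injOn, card_range]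
  intro a ha b' hb' hab
  simp only [mem_coe, mem_range] at ha hb'
  exact zmod_cast_inj (lt_of_lt_of_le ha hdb) (lt_of_lt_of_le hb' hdb) (add_left_cancel hab)

lemma suppInt_unique {d : ℕ} {c : ZMod n → F} {i i' : ZMod n} (h : SuppInt d c i)
    (h' : SuppInt d c i') (hd : 1 ≤ d) (hdn : d < n) : i = i' := by
  have key : ∀ j : ZMod n, SuppInt d c j → c (j - 1) = 0 := by
    intro j hj
    by_contra hne
    obtain ⟨t, ht, hjt⟩ := (hj _).1 hne
    have : ((t + 1 : ℕ) : ZMod n) = 0 := by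
      push_cast
      linear_combination -hjt
    have := (ZMod.natCast_eq_zero_iff _ _).1 this
    have := Nat.le_of_dvd (by omega) this
    omega
  have hci' : c i' ≠ 0 := (h' i').2 ⟨0, hd, by simp⟩
  obtain ⟨t, ht, hit⟩ := (h i').1 hci'
  rcases Nat.eq_zero_or_pos t with rfl | htpos
  · simp at hit; exact hit.symm
  · exfalso
    have h1 : c (i' - 1) ≠ 0 := by
      have : i' - 1 = i + ((t - 1 : ℕ) : ZMod n) := by
        rw [hit]; push_cast [Nat.cast_sub htpos]; ring
      rw [this]
      exact (h _).2 ⟨t - 1, by omega, rfl⟩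
    exact h1 (key i' h')

lemma wtb_min_suppInt {b d : ℕ} {c : ZMod n → F} (hd : 1 ≤ d)
    (hdw : d ≤ hammingNorm c) (hb : 2 ≤ b) (hdb : d + b - 1 < n)
    (hw : wtb b c = d + b - 1) : ∃ i, SuppInt d c i := by
  classical
  -- there is an all-zero window
  have hzex : ∃ z : ZMod n, ∀ j < b, c (z + (j : ZMod n)) = 0 := by
    by_contra hcon
    push_neg at hcon
    have heq : (Finset.univ.filter fun i : ZMod n => ∃ j < b, c (i + (j : ZMod n)) ≠ 0)
        = Finset.univ := by
      apply Finset.filter_true_of_mem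
      intro z _
      obtain ⟨j, hj, hne⟩ := hcon z
      exact ⟨j, hj, hne⟩
    have := wtb_eq_card b c
    rw [heq, card_univ, ZMod.card] at this
    omega
  obtain ⟨z, hz⟩ := hzex
  set M : Finset ℕ := (range n).filter (fun m => c (z + (m : ZMod n)) ≠ 0) with hM
  have hMcard : M.card = hammingNorm c := by
    rw [hammingNorm_eq, card_filter_shift z (fun x => c x ≠ 0)]
  have hMlb : ∀ m ∈ M, b ≤ m := by
    intro m hm
    simp only [hM, mem_filter, mem_range] at hm
    by_contra hlt'
    exact hm.2 (hz m (by omega))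
  have hMub : ∀ m ∈ M, m < n := fun m hm => mem_range.1 (mem_filter.1 hm).1
  have hMne : M.Nonempty := card_pos.1 (by omega)
  set W : Finset ℕ := (range n).filter (fun m => ∃ j < b, m + j ∈ M) with hW
  have hWcard : W.card = d + b - 1 := by
    rw [← hw, wtb_eq_card, card_filter_shift z]
    congr 1
    apply Finset.filter_congr
    intro m hm
    rw [mem_range] at hm
    constructor
    · rintro ⟨j, hj, hmem⟩
      refine ⟨j, hj, ?_⟩
      have hmjn : m + j < n := hMub _ hmem
      have hcm : c (z + ((m + j : ℕ) : ZMod n)) ≠ 0 := by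
        simp only [hM, mem_filter, mem_range] at hmem; exact hmem.2
      rwa [show z + ((m + j : ℕ) : ZMod n) = z + (m : ZMod n) + (j : ZMod n) by
        push_cast; ring] at hcm
    · rintro ⟨j, hj, hne⟩
      refine ⟨j, hj, ?_⟩
      by_cases hmj : m + j < n
      · simp only [hM, mem_filter, mem_range]
        refine ⟨hmj, ?_⟩
        rwa [show z + ((m + j : ℕ) : ZMod n) = z + (m : ZMod n) + (j : ZMod n) by
          push_cast; ring]
      · exfalso
        have hub : m + j - n < b := by omega
        have hcast : ((m + j - n : ℕ) : ZMod n) = ((m + j : ℕ) : ZMod n) := by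
          conv_rhs => rw [show m + j = (m + j - n) + n by omega]
          push_cast [ZMod.natCast_self]; ring
        apply hne
        have hzz := hz _ hub
        rwa [hcast, show z + ((m + j : ℕ) : ZMod n) = z + (m : ZMod n) + (j : ZMod n) by
          push_cast; ring] at hzz
  set m₁ := M.min' hMne with hm1
  have hm1M : m₁ ∈ M := M.min'_mem hMne
  have hbm1 : b ≤ m₁ := hMlb _ hm1M
  have hm1n : m₁ < n := hMub _ hm1M
  have hMW : M ⊆ W := by
    intro m hm
    simp only [hW, mem_filter, mem_range]
    exact ⟨hMub _ hm, 0, by omega, by simpa using hm⟩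
  have hIW : Ico (m₁ - (b - 1)) m₁ ⊆ W := by
    intro m hm
    rw [mem_Ico] at hm
    simp only [hW, mem_filter, mem_range]
    refine ⟨by omega, m₁ - m, by omega, ?_⟩
    have : m + (m₁ - m) = m₁ := by omega
    rw [this]; exact hm1M
  have hdisj : Disjoint M (Ico (m₁ - (b - 1)) m₁) := by
    rw [Finset.disjoint_right]
    intro m hm hmM
    rw [mem_Ico] at hm
    exact absurd (M.min'_le _ hmM) (by omega)
  have hlow : M.card + (b - 1) ≤ W.card := by
    have h1 := card_le_card (union_subset hMW hIW)
    rw [card_union_of_disjoint hdisj, Nat.card_Ico] at h1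
    omega
  have hMcard_d : M.card = d := by omega
  have hint : M = Ico m₁ (m₁ + d) := by
    by_contra hne
    set m₂ := M.max' hMne with hm2
    have hm2M : m₂ ∈ M := M.max'_mem hMne
    have hm2n : m₂ < n := hMub _ hm2M
    have hsub : M ⊆ Icc m₁ m₂ := fun m hm => mem_Icc.2 ⟨M.min'_le _ hm, M.le_max' _ hm⟩
    have hTne : ((Icc m₁ m₂).filter (· ∉ M)).Nonempty := by
      rw [filter_nonempty_iff]
      by_contra hT
      push_neg at hT
      have hsub2 : Icc m₁ m₂ ⊆ M := fun m hm => hT m hm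
      have heq : M = Icc m₁ m₂ := subset_antisymm hsub hsub2
      have hm12 : m₁ ≤ m₂ := M.min'_le _ hm2M
      have hcard2 : m₂ + 1 - m₁ = d := by
        rw [← Nat.card_Icc, ← heq, hMcard_d]
      apply hne
      rw [heq, show m₁ + d = m₂ + 1 by omega, Finset.Ico_add_one_right_eq_Icc]
    set y := ((Icc m₁ m₂).filter (· ∉ M)).max' hTne with hy
    have hyT : y ∈ (Icc m₁ m₂).filter (· ∉ M) := max'_mem _ hTne
    rw [mem_filter, mem_Icc] at hyT
    obtain ⟨⟨hy1, hy2⟩, hyM⟩ := hyT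
    have hyne1 : y ≠ m₁ := fun h => hyM (h ▸ hm1M)
    have hyne2 : y ≠ m₂ := fun h => hyM (h ▸ hm2M)
    have hysM : y + 1 ∈ M := by
      by_contra hys
      have : y + 1 ∈ (Icc m₁ m₂).filter (· ∉ M) := by
        rw [mem_filter, mem_Icc]
        exact ⟨⟨by omega, by omega⟩, hys⟩
      have := le_max' _ _ this
      omega
    have hyW : y ∈ W := by
      simp only [hW, mem_filter, mem_range]
      exact ⟨by omega, 1, by omega, hysM⟩
    have hbig : insert y (M ∪ Ico (m₁ - (b - 1)) m₁) ⊆ W :=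
      insert_subset hyW (union_subset hMW hIW)
    have hynotin : y ∉ M ∪ Ico (m₁ - (b - 1)) m₁ := by
      rw [mem_union, mem_Ico]
      push_neg
      exact ⟨hyM, fun _ => by omega⟩
    have h2 := card_le_card hbig
    rw [card_insert_of_notMem hynotin, card_union_of_disjoint hdisj, Nat.card_Ico] at h2
    omega
  refine ⟨z + (m₁ : ZMod n), fun x => ?_⟩
  constructor
  · intro hx
    set m := (x - z).val with hmv
    have hmn : m < n := ZMod.val_lt _
    have hxm : x = z + (m : ZMod n) := by
      rw [hmv, ZMod.natCast_val, ZMod.cast_id]; ring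
    have hmM : m ∈ M := by
      simp only [hM, mem_filter, mem_range]
      exact ⟨hmn, by rwa [← hxm]⟩
    rw [hint, mem_Ico] at hmM
    refine ⟨m - m₁, by omega, ?_⟩
    rw [hxm]
    push_cast [Nat.cast_sub hmM.1]
    ring
  · rintro ⟨t, ht, rfl⟩
    have hmem : m₁ + t ∈ M := by rw [hint, mem_Ico]; omega
    simp only [hM, mem_filter, mem_range] at hmem
    have harr : z + (m₁ : ZMod n) + (t : ZMod n) = z + ((m₁ + t : ℕ) : ZMod n) := by
      push_cast; ring
    rw [harr]
    exact hmem.2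

lemma count_suppInt (k d : ℕ) (C : Submodule F (ZMod n → F))
    (hk : Module.finrank F C = k) (hmin : ∀ c ∈ C, c ≠ 0 → d ≤ hammingNorm c)
    (hk1 : 1 ≤ k) (hkn : k ≤ n) (hMDS : d = n - k + 1) (i : ZMod n) :
    Nat.card {c : C // SuppInt d (c : ZMod n → F) i} = Fintype.card F - 1 := by
  classical
  have hd1 : 1 ≤ d := by omega
  have hdn : d ≤ n := by omega
  set I : Finset (ZMod n) := (range d).image (fun t : ℕ => i + (t : ZMod n)) with hI
  have hIcard : I.card = d := by
    rw [hI, card_image_of_injOn, card_range]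
    intro a ha b hb hab
    simp only [mem_coe, mem_range] at ha hb
    exact zmod_cast_inj (by omega) (by omega) (add_left_cancel hab)
  -- the restriction map to the complement of I
  let φ : C →ₗ[F] ({x : ZMod n // x ∉ I} → F) :=
    { toFun := fun c x => (c : ZMod n → F) x.1
      map_add' := fun a b => rfl
      map_smul' := fun m a => rfl }
  have hrn := LinearMap.finrank_range_add_finrank_ker φ
  have hrange : Module.finrank F (LinearMap.range φ) ≤ k - 1 := by
    have h1 := Submodule.finrank_le (LinearMap.range φ)
    have h2 : Module.finrank F ({x : ZMod n // x ∉ I} → F) = n - d := by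
      rw [Module.finrank_pi, Fintype.card_subtype_compl, Fintype.card_coe, hIcard, ZMod.card]
    omega
  have hker : LinearMap.ker φ ≠ ⊥ := by
    intro h0
    rw [h0, finrank_bot, hk] at hrn
    omega
  obtain ⟨c0, hc0ker, hc0ne⟩ := (Submodule.ne_bot_iff _).1 hker
  -- any nonzero codeword vanishing off I has support interval i
  have key : ∀ c : C, (∀ x ∉ I, (c : ZMod n → F) x = 0) → (c : ZMod n → F) ≠ 0 →
      SuppInt d (c : ZMod n → F) i := by
    intro c hcsupp hcne
    have hsub : (Finset.univ.filter fun x : ZMod n => (c : ZMod n → F) x ≠ 0) ⊆ I := by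
      intro x hx
      rw [mem_filter] at hx
      by_contra hxn
      exact hx.2 (hcsupp x hxn)
    have hle : d ≤ (Finset.univ.filter fun x : ZMod n => (c : ZMod n → F) x ≠ 0).card := by
      rw [← hammingNorm_eq]; exact hmin c c.2 hcne
    have heq : (Finset.univ.filter fun x : ZMod n => (c : ZMod n → F) x ≠ 0) = I :=
      Finset.eq_of_subset_of_card_le hsub (by omega)
    intro x
    constructor
    · intro hx
      have : x ∈ I := heq ▸ (mem_filter.2 ⟨mem_univ _, hx⟩)
      rw [hI, mem_image] at this
      obtain ⟨t, ht, hxt⟩ := this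
      exact ⟨t, mem_range.1 ht, hxt.symm⟩
    · rintro ⟨t, ht, rfl⟩
      have hmem : i + (t : ZMod n) ∈ I := mem_image.2 ⟨t, mem_range.2 ht, rfl⟩
      rw [← heq, mem_filter] at hmem
      exact hmem.2
  have hc0fun : (c0 : ZMod n → F) ≠ 0 := by
    intro h
    exact hc0ne (Subtype.ext h)
  have hc0supp : ∀ x ∉ I, (c0 : ZMod n → F) x = 0 := by
    intro x hx
    have := congrFun (LinearMap.mem_ker.1 hc0ker) ⟨x, hx⟩
    exact this
  have hc0int : SuppInt d (c0 : ZMod n → F) i := key c0 hc0supp hc0fun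
  have hc0i : (c0 : ZMod n → F) i ≠ 0 := (hc0int i).2 ⟨0, hd1, by simp⟩
  -- for c with SuppInt, c = (c i / c0 i) • c0
  have hdep : ∀ c : C, SuppInt d (c : ZMod n → F) i →
      c = ((c : ZMod n → F) i * ((c0 : ZMod n → F) i)⁻¹) • c0 := by
    intro c hc
    set u := (c : ZMod n → F) i * ((c0 : ZMod n → F) i)⁻¹ with hu
    set y : C := c - u • c0 with hy
    have hysupp : ∀ x ∉ I, (y : ZMod n → F) x = 0 := by
      intro x hx
      have h1 : (c : ZMod n → F) x = 0 := by
        by_contra h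
        obtain ⟨t, ht, rfl⟩ := (hc x).1 h
        exact hx (mem_image.2 ⟨t, mem_range.2 ht, rfl⟩)
      have h2 : (c0 : ZMod n → F) x = 0 := hc0supp x hx
      simp [hy, h1, h2]
    have hyi : (y : ZMod n → F) i = 0 := by
      simp only [hy, Submodule.coe_sub, Submodule.coe_smul, Pi.sub_apply, Pi.smul_apply,
        smul_eq_mul, hu]
      field_simp
      simp
    have hy0 : y = 0 := by
      by_contra hyne
      have hyfun : (y : ZMod n → F) ≠ 0 := fun h => hyne (Subtype.ext h)
      have hle := hmin y y.2 hyfun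
      have hsub : (Finset.univ.filter fun x : ZMod n => (y : ZMod n → F) x ≠ 0) ⊆ I.erase i := by
        intro x hx
        rw [mem_filter] at hx
        rw [mem_erase]
        refine ⟨?_, ?_⟩
        · rintro rfl; exact hx.2 hyi
        · by_contra hxn; exact hx.2 (hysupp x hxn)
      have hcard := card_le_card hsub
      rw [card_erase_of_mem (mem_image.2 ⟨0, mem_range.2 hd1, by simp⟩), hIcard] at hcard
      rw [hammingNorm_eq] at hle
      omega
    rw [hy] at hy0
    exact (sub_eq_zero.1 hy0)
  -- the equivalence with nonzero scalars
  have e : {c : C // SuppInt d (c : ZMod n → F) i} ≃ {u : F // u ≠ 0} :=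
    { toFun := fun c => ⟨(c.1 : ZMod n → F) i * ((c0 : ZMod n → F) i)⁻¹, by
        have hci : (c.1 : ZMod n → F) i ≠ 0 := (c.2 i).2 ⟨0, hd1, by simp⟩
        exact mul_ne_zero hci (inv_ne_zero hc0i)⟩
      invFun := fun u => ⟨u.1 • c0, by
        intro x
        simp only [Submodule.coe_smul, Pi.smul_apply, smul_eq_mul, mul_ne_zero_iff]
        constructor
        · rintro ⟨-, h⟩; exact (hc0int x).1 h
        · intro h; exact ⟨u.2, (hc0int x).2 h⟩⟩
      left_inv := fun c => by
        ext1
        exact (hdep c.1 c.2).symm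
      right_inv := fun u => by
        ext1
        simp only [Submodule.coe_smul, Pi.smul_apply, smul_eq_mul]
        field_simp }
  rw [Nat.card_congr e, Nat.card_eq_fintype_card, Fintype.card_subtype_compl,
    Fintype.card_subtype_eq]

end aux

theorem mds_bweight_min_count
    {F : Type*} [Field F] [Fintype F] [DecidableEq F] {n : ℕ} [NeZero n]
    (k d b : ℕ) (C : Submodule F (ZMod n → F))
    (hk : Module.finrank F C = k)
    (hmin : ∀ c ∈ C, c ≠ 0 → d ≤ hammingNorm c)
    (hex : ∃ c ∈ C, c ≠ 0 ∧ hammingNorm c = d)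
    (hMDS : d = n - k + 1)
    (hb : 2 ≤ b) (hdb : d + b - 1 < n) :
    Nat.card {c : C // wtb b (c : ZMod n → F) = d + b - 1} =
      n * (Fintype.card F - 1) := by
  classical
  have hkn : k ≤ n := by
    have h1 := Submodule.finrank_le C
    rw [hk, Module.finrank_pi, ZMod.card] at h1
    exact h1
  have hk1 : 1 ≤ k := by
    obtain ⟨c, hcC, hc0, -⟩ := hex
    have hnt : Nontrivial C :=
      ⟨⟨c, hcC⟩, 0, fun h => hc0 (by simpa [Subtype.ext_iff] using h)⟩
    have := Module.finrank_pos (R := F) (M := C)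
    omega
  have hd1 : 1 ≤ d := by omega
  have hdn : d < n := by omega
  have hiff : ∀ c : C, (wtb b (c : ZMod n → F) = d + b - 1) ↔
      ∃ i, SuppInt d (c : ZMod n → F) i := by
    intro c
    constructor
    · intro hw
      by_cases hc0 : (c : ZMod n → F) = 0
      · exfalso
        rw [hc0] at hw
        rw [wtb_eq_card] at hw
        simp only [Pi.zero_apply, ne_eq, not_true_eq_false] at hw
        simp only [exists_prop, and_false, exists_const, filter_false, card_empty] at hw
        omega
      · exact wtb_min_suppInt hd1 (hmin c c.2 hc0) hb hdb hw
    · rintro ⟨i, hi⟩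
      exact suppInt_wtb hi (by omega) hd1 (le_of_lt hdb)
  have e1 : {c : C // wtb b (c : ZMod n → F) = d + b - 1} ≃
      {c : C // ∃ i, SuppInt d (c : ZMod n → F) i} :=
    Equiv.subtypeEquivRight hiff
  have hsig : ∀ (i₁ i₂ : ZMod n) (hi : i₁ = i₂) (c₁ : {c : C // SuppInt d (c : ZMod n → F) i₁})
      (c₂ : {c : C // SuppInt d (c : ZMod n → F) i₂}), (c₁ : C) = (c₂ : C) →
      (⟨i₁, c₁⟩ : Σ i : ZMod n, {c : C // SuppInt d (c : ZMod n → F) i}) = ⟨i₂, c₂⟩ := by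
    rintro i₁ i₂ rfl c₁ c₂ h
    rw [Subtype.ext h]
  have e2 : {c : C // ∃ i, SuppInt d (c : ZMod n → F) i} ≃
      Σ i : ZMod n, {c : C // SuppInt d (c : ZMod n → F) i} :=
    { toFun := fun c => ⟨Classical.choose c.2, c.1, Classical.choose_spec c.2⟩
      invFun := fun p => ⟨p.2.1, p.1, p.2.2⟩
      left_inv := fun c => Subtype.ext rfl
      right_inv := fun p => by
        obtain ⟨i, c, hc⟩ := p
        exact hsig _ _ (suppInt_unique (Classical.choose_spec (⟨i, hc⟩ :
          ∃ i', SuppInt d (c : ZMod n → F) i')) hc hd1 hdn) _ _ rfl }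
  rw [Nat.card_congr (e1.trans e2), Nat.card_eq_fintype_card, Fintype.card_sigma]
  have hterm : ∀ i : ZMod n, Fintype.card {c : C // SuppInt d (c : ZMod n → F) i}
      = Fintype.card F - 1 := by
    intro i
    rw [← Nat.card_eq_fintype_card]
    exact count_suppInt k d C hk hmin hk1 hkn hMDS i
  rw [Finset.sum_congr rfl fun i _ => hterm i, Finset.sum_const, card_univ, ZMod.card,
    smul_eq_mul]
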